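/- arXiv:2002.03913 — 2 statements merged into one kernel-verified Lean document; each statement's English description precedes it below -/
import Mathlib

section
/- Reduced Hamilton–Jacobi equation. Let S^i(x,u), i = 1,…,m, be smooth functions and let γ̄ = dS be the exterior derivative of the 1-semibasic m-form S = S^i(x,u) ∂_i⌟d_mx on E, so that the associated section of J¹π* → E has p-components γ^i_α = ∂S^i/∂u^α. Then the m-form h∘μ∘γ̄ = −H(x,u,∂S^i/∂u^α) d_mx + (∂S^i/∂u^α) du^α∧(∂_i⌟d_mx) on E is closed if and only if there exists a function f: ℝ^m → ℝ such that Σ_i ∂S^i/∂x^i(x,u) + H(x^j, u^β, ∂S^i/∂u^α(x,u)) = f(x) for all (x,u), i.e. the left-hand side is independent of the fibre variables u^α. -/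
open scoped BigOperators

noncomputable section

/-- A raw `k`-cochain on `E`: a scalar function of a point and `k` tangent vectors.
Smooth differential `k`-forms are regarded as such cochains by evaluation. -/
abbrev Coch (E : Type) (k : ℕ) : Type := E → (Fin k → E) → ℝ

/-- The exterior derivative of a `k`-cochain:
`(dω)(x)(v₀,…,v_k) = ∑ⱼ (-1)ʲ ∂_{vⱼ}(y ↦ ω(y)(v₀,…,v̂ⱼ,…,v_k))(x)`. -/
noncomputable def extDer {E : Type} [NormedAddCommGroup E] [NormedSpace ℝ E] {k : ℕ}
    (ω : Coch E k) : Coch E (k + 1) := fun x v =>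
  ∑ j : Fin (k + 1),
    (-1 : ℝ) ^ (j : ℕ) * fderiv ℝ (fun y => ω y (v ∘ j.succAbove)) x (v j)

/-- Wedge product of a 1-cochain with a `k`-cochain. -/
def wedge1 {E : Type} {k : ℕ} (θ : Coch E 1) (ω : Coch E k) : Coch E (k + 1) := fun x v =>
  ∑ j : Fin (k + 1), (-1 : ℝ) ^ (j : ℕ) * θ x (fun _ => v j) * ω x (v ∘ j.succAbove)

/-- Interior product (contraction) of a cochain with a vector field. -/
def iotaV {E : Type} {k : ℕ} (X : E → E) (ω : Coch E (k + 1)) : Coch E k := fun x v =>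
  ω x (Fin.cons (X x) v)

/-- Pullback of a cochain along a (smooth) map. -/
noncomputable def pullC {E F : Type} [NormedAddCommGroup E] [NormedSpace ℝ E]
    [NormedAddCommGroup F] [NormedSpace ℝ F] {k : ℕ}
    (f : F → E) (ω : Coch E k) : Coch F k := fun x v =>
  ω (f x) fun a => fderiv ℝ f x (v a)

/-- The configuration bundle `E = ℝ^m × ℝ^N` with fibre coordinates `u^α`. -/
abbrev Eb (m N : ℕ) : Type := (Fin m → ℝ) × (Fin N → ℝ)

/-- The coordinate volume form `d_mx = dx¹∧⋯∧dx^m` on `E`. -/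
def dmxE (m N : ℕ) : Coch (Eb m N) m := fun _ v => Matrix.det (Matrix.of fun a b => (v b).1 a)

/-- The coordinate 1-form `du^α` on `E`. -/
def duE (m N : ℕ) (α : Fin N) : Coch (Eb m N) 1 := fun _ v => (v 0).2 α

/-- The coordinate vector `∂/∂xⁱ` on `E`. -/
def XdirE (m N : ℕ) (i : Fin m) : Eb m N := (Pi.single i 1, 0)

/-- The `m`-form `du^α ∧ (∂_i ⌟ d_mx) = -(∂_i ⌟ (du^α ∧ d_mx))` on `E`. -/
def duContrE (m N : ℕ) (α : Fin N) (i : Fin m) : Coch (Eb m N) m := fun e v =>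
  -(iotaV (fun _ => XdirE m N i) (wedge1 (duE m N α) (dmxE m N)) e v)

namespace RHJ

/-- x-coordinate row functional. -/
def rX (m N : ℕ) (j : Fin m) : Eb m N → ℝ := fun z => z.1 j

/-- u-coordinate row functional. -/
def rU (m N : ℕ) (β : Fin N) : Eb m N → ℝ := fun z => z.2 β

/-- u-basis vector. -/
def UV (m N : ℕ) (β : Fin N) : Eb m N := (0, Pi.single β 1)

/-- determinant of the matrix of row functionals applied to vectors. -/
def Mx {m N k : ℕ} (r : Fin k → (Eb m N → ℝ)) (v : Fin k → Eb m N) :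
    Matrix (Fin k) (Fin k) ℝ :=
  Matrix.of fun a b => r a (v b)

def Dt {m N k : ℕ} (r : Fin k → (Eb m N → ℝ)) (v : Fin k → Eb m N) : ℝ :=
  Matrix.det (Mx r v)

@[simp] theorem Mx_apply {m N k : ℕ} (r : Fin k → (Eb m N → ℝ)) (v : Fin k → Eb m N)
    (a b : Fin k) : Mx r v a b = r a (v b) := rfl

theorem vec_decomp {m N : ℕ} (z : Eb m N) :
    z = (∑ j, z.1 j • XdirE m N j) + ∑ β, z.2 β • UV m N β := by
  ext k
  · simp [XdirE, UV, Prod.fst_sum, Finset.sum_apply, Pi.single_apply, mul_ite]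
  · simp [XdirE, UV, Prod.snd_sum, Finset.sum_apply, Pi.single_apply, mul_ite]

theorem clm_expand {m N : ℕ} (L : Eb m N →L[ℝ] ℝ) (z : Eb m N) :
    L z = (∑ j, L (XdirE m N j) * z.1 j) + ∑ β, L (UV m N β) * z.2 β := by
  conv_lhs => rw [vec_decomp z]
  simp [smul_eq_mul, mul_comm]

theorem Dt_cons {m N k : ℕ} (θ : Eb m N → ℝ) (r : Fin k → (Eb m N → ℝ))
    (v : Fin (k + 1) → Eb m N) :
    Dt (Fin.cons θ r) v
      = ∑ j : Fin (k + 1), (-1 : ℝ) ^ (j : ℕ) * θ (v j) * Dt r (v ∘ j.succAbove) := by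
  rw [Dt, Matrix.det_succ_row_zero]
  refine Finset.sum_congr rfl fun j _ => ?_
  simp [Dt, Mx, Matrix.submatrix, Function.comp_def]

theorem Dt_cons_clm {m N k : ℕ} (L : Eb m N →L[ℝ] ℝ) (r : Fin k → (Eb m N → ℝ))
    (v : Fin (k + 1) → Eb m N) :
    Dt (Fin.cons (fun z => L z) r) v
      = (∑ j, L (XdirE m N j) * Dt (Fin.cons (rX m N j) r) v)
        + ∑ β, L (UV m N β) * Dt (Fin.cons (rU m N β) r) v := by
  have conv1 : ∀ θ : Eb m N → ℝ, Dt (Fin.cons θ r) v =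
      Matrix.detRowAlternating
        (Function.update (fun a b => Mx (Fin.cons (fun _ => (0:ℝ)) r) v a b) 0
          (fun b => θ (v b))) := by
    intro θ
    have : Mx (Fin.cons θ r) v =
        Function.update (fun a b => Mx (Fin.cons (fun _ => (0:ℝ)) r) v a b) 0
          (fun b => θ (v b)) := by
      funext a
      refine Fin.cases ?_ (fun a' => ?_) a
      · funext b; simp
      · funext b
        simp [Mx, Function.update_of_ne (Fin.succ_ne_zero a')]
    rw [Dt, this]
    rfl
  have hrow : (fun b => L (v b)) =
      (∑ j, L (XdirE m N j) • fun b => rX m N j (v b)) +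
        ∑ β, L (UV m N β) • fun b => rU m N β (v b) := by
    funext b
    simp only [Pi.add_apply, Finset.sum_apply, Pi.smul_apply, smul_eq_mul, rX, rU]
    exact clm_expand L (v b)
  rw [conv1, hrow, AlternatingMap.map_update_add, AlternatingMap.map_update_sum,
    AlternatingMap.map_update_sum]
  simp only [AlternatingMap.map_update_smul, smul_eq_mul]
  congr 1
  · exact Finset.sum_congr rfl fun j _ => by rw [conv1]
  · exact Finset.sum_congr rfl fun β _ => by rw [conv1]

theorem Dt_xx_zero {m N : ℕ} (j : Fin m) (v : Fin (m+1) → Eb m N) :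
    Dt (Fin.cons (rX m N j) (fun a => rX m N a)) v = 0 := by
  refine Matrix.det_zero_of_row_eq (i := 0) (j := j.succ) (Fin.succ_ne_zero j).symm ?_
  funext b
  simp [Mx]

theorem Dt_swap01 {m N k : ℕ} (θ₁ θ₂ : Eb m N → ℝ) (r : Fin k → (Eb m N → ℝ))
    (v : Fin (k + 2) → Eb m N) :
    Dt (Fin.cons θ₁ (Fin.cons θ₂ r)) v = -Dt (Fin.cons θ₂ (Fin.cons θ₁ r)) v := by
  have hM : Mx (Fin.cons θ₁ (Fin.cons θ₂ r)) v =
      (Mx (Fin.cons θ₂ (Fin.cons θ₁ r)) v).submatrix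
        (Equiv.swap (0 : Fin (k+2)) 1) id := by
    funext a b
    refine Fin.cases ?_ (fun a' => ?_) a
    · simp [Mx, Equiv.swap_apply_left]
    · refine Fin.cases ?_ (fun a'' => ?_) a'
      · simp [Mx, Equiv.swap_apply_right, show ((0:Fin (k+2)).succ) = 1 from rfl]
      · have h1 : (a''.succ.succ : Fin (k+2)) ≠ 0 := Fin.succ_ne_zero _
        have h2 : (a''.succ.succ : Fin (k+2)) ≠ 1 := by
          simp [Fin.ext_iff]
        simp [Mx, Equiv.swap_apply_of_ne_of_ne h1 h2]
  rw [Dt, hM, Matrix.det_permute]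
  have : ((0:Fin (k+2))) ≠ 1 := by simp [Fin.ext_iff]
  simp [Equiv.Perm.sign_swap this, Dt]

theorem Dt_xu_zero {m N : ℕ} (i : Fin (m+1)) (j : Fin (m+1)) (hij : j ≠ i) (α : Fin N)
    (v : Fin (m+2) → Eb (m+1) N) :
    Dt (Fin.cons (rX (m+1) N j)
      (Fin.cons (rU (m+1) N α) (fun a => rX (m+1) N (i.succAbove a)))) v = 0 := by
  obtain ⟨a0, ha0⟩ := Fin.exists_succAbove_eq hij
  refine Matrix.det_zero_of_row_eq (i := 0) (j := a0.succ.succ) (Fin.succ_ne_zero _).symm ?_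
  funext b
  simp [ha0]

theorem Dt_xi_perm {m N : ℕ} (i : Fin (m+1)) (α : Fin N) (v : Fin (m+2) → Eb (m+1) N) :
    Dt (Fin.cons (rX (m+1) N i)
        (Fin.cons (rU (m+1) N α) (fun a => rX (m+1) N (i.succAbove a)))) v
      = (-1:ℝ)^((i:ℕ)+1) * Dt (Fin.cons (rU (m+1) N α) (fun a => rX (m+1) N a)) v := by
  set π : Equiv.Perm (Fin (m+2)) := (Fin.cycleRange i.succ)⁻¹ with hπ
  have hπ0 : π 0 = i.succ := by
    rw [hπ, Equiv.Perm.inv_def, Equiv.symm_apply_eq, Fin.cycleRange_self]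
  have hπ1 : π 1 = 0 := by
    rw [hπ, Equiv.Perm.inv_def, Equiv.symm_apply_eq]
    have : (0 : Fin (m+2)) < i.succ := Fin.succ_pos i
    rw [Fin.cycleRange_of_lt this]
    rfl
  have hπs : ∀ a : Fin (m+1), π a.succ = i.succ.succAbove a := by
    intro a
    rw [hπ, Equiv.Perm.inv_def, Equiv.symm_apply_eq, Fin.cycleRange_succAbove]
  have hM : Mx (Fin.cons (rX (m+1) N i)
        (Fin.cons (rU (m+1) N α) (fun a => rX (m+1) N (i.succAbove a)))) v
      = (Mx (Fin.cons (rU (m+1) N α) (fun a => rX (m+1) N a)) v).submatrix π id := by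
    funext a b
    refine Fin.cases ?_ (fun a' => ?_) a
    · simp [hπ0]
    · refine Fin.cases ?_ (fun a'' => ?_) a'
      · have : ((0:Fin (m+1)).succ) = (1 : Fin (m+2)) := rfl
        rw [this]
        simp [hπ1]
      · rw [Matrix.submatrix_apply, hπs a''.succ, id_eq, Fin.succ_succAbove_succ]
        simp
  rw [Dt, hM, Matrix.det_permute]
  have hsgn : Equiv.Perm.sign π = (-1:ℤˣ)^((i:ℕ)+1) := by
    rw [hπ, Equiv.Perm.sign_inv, Fin.sign_cycleRange, Fin.val_succ]
  rw [hsgn, Dt]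
  push_cast
  ring

theorem duContrE_eq {m N : ℕ} (α : Fin N) (i : Fin (m+1)) (e : Eb (m+1) N)
    (w : Fin (m+1) → Eb (m+1) N) :
    duContrE (m+1) N α i e w
      = (-1:ℝ)^(i:ℕ)
          * Dt (Fin.cons (rU (m+1) N α) (fun a => rX (m+1) N (i.succAbove a))) w := by
  rw [Dt_cons]
  rw [duContrE, iotaV, wedge1]
  set W : Fin (m+2) → Eb (m+1) N := Fin.cons (XdirE (m+1) N i) w with hW
  rw [Fin.sum_univ_succ]
  have h0 : duE (m+1) N α e (fun _ => W 0) = 0 := by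
    simp [hW, duE, XdirE]
  rw [h0]
  simp only [mul_zero, zero_mul, zero_add, neg_add, neg_zero, zero_add]
  rw [← Finset.sum_neg_distrib, Finset.mul_sum]
  refine Finset.sum_congr rfl fun k _ => ?_
  have hdu : duE (m+1) N α e (fun _ => W k.succ) = (w k).2 α := by
    simp [hW, duE]
  rw [hdu]
  have hdet : dmxE (m+1) N e (W ∘ (k.succ).succAbove)
      = (-1:ℝ)^(i:ℕ) * Matrix.det (Mx (fun a => rX (m+1) N (i.succAbove a))
          (w ∘ k.succAbove)) := by
    rw [dmxE, Matrix.det_succ_column_zero]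
    rw [Fintype.sum_eq_single i]
    · have hc0 : (Fin.cons (XdirE (m+1) N i) w ∘ (k.succ).succAbove) 0 = XdirE (m+1) N i := by
        simp [Function.comp]
      have : (Matrix.of fun a b =>
          ((Fin.cons (XdirE (m+1) N i) w ∘ (k.succ).succAbove) b).1 a) i 0 = 1 := by
        simp [hc0, XdirE]
      rw [this, mul_one]
      have hmx : (Matrix.of fun a b =>
            ((W ∘ (k.succ).succAbove) b).1 a).submatrix i.succAbove Fin.succ
          = Mx (fun a => rX (m+1) N (i.succAbove a)) (w ∘ k.succAbove) := by
        funext a b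
        simp only [Matrix.submatrix_apply, Matrix.of_apply, Function.comp, Mx_apply]
        rw [Fin.succ_succAbove_succ, hW, Fin.cons_succ]
        rfl
      rw [hmx]
    · intro a ha
      have : (Matrix.of fun a b =>
          ((W ∘ (k.succ).succAbove) b).1 a) a 0 = 0 := by
        simp [hW, Function.comp, XdirE, Pi.single_apply, ha]
      rw [this]
      ring
  rw [hdet, Dt]
  simp only [rU, Fin.val_succ, pow_succ]
  ring

theorem topsucc : ((⊤:ℕ∞) : WithTop ℕ∞) + 1 ≤ ((⊤:ℕ∞) : WithTop ℕ∞) := by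
  exact_mod_cast le_top

theorem top2 : (2 : WithTop ℕ∞) ≤ ((⊤:ℕ∞) : WithTop ℕ∞) := by
  have : ((2:ℕ∞) : WithTop ℕ∞) ≤ ((⊤:ℕ∞) : WithTop ℕ∞) := by exact_mod_cast le_top
  simpa using this

theorem top1 : ((⊤:ℕ∞) : WithTop ℕ∞) ≠ 0 := by
  simp

theorem fderiv_const_smooth {E F : Type*} [NormedAddCommGroup E] [NormedSpace ℝ E]
    [NormedAddCommGroup F] [NormedSpace ℝ F] {f : E → F} (hf : ContDiff ℝ (⊤:ℕ∞) f) (c : E) :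
    ContDiff ℝ (⊤:ℕ∞) (fun y => fderiv ℝ f y c) := by
  have h1 : ContDiff ℝ (⊤:ℕ∞) (fderiv ℝ f) := hf.fderiv_right topsucc
  exact (ContinuousLinearMap.apply ℝ F c).contDiff.comp h1

theorem sym2nd {E : Type*} [NormedAddCommGroup E] [NormedSpace ℝ E]
    {f : E → ℝ} (hf : ContDiff ℝ (⊤:ℕ∞) f) (e a b : E) :
    fderiv ℝ (fun y => fderiv ℝ f y a) e b = fderiv ℝ (fun y => fderiv ℝ f y b) e a := by
  have hd : DifferentiableAt ℝ (fderiv ℝ f) e :=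
    ((hf.fderiv_right topsucc).differentiable top1) e
  have key : ∀ c : E, fderiv ℝ (fun y => fderiv ℝ f y c) e
      = (fderiv ℝ (fderiv ℝ f) e).flip c := by
    intro c
    rw [fderiv_clm_apply hd (differentiableAt_const c)]
    simp
  rw [key a, key b]
  simp only [ContinuousLinearMap.flip_apply]
  have hsymm : IsSymmSndFDerivAt ℝ f e := hf.contDiffAt.isSymmSndFDerivAt (by simpa using top2)
  exact hsymm.eq b a

theorem sum_sym_antisym {N' : ℕ} (c d : Fin N' → Fin N' → ℝ) (hc : ∀ a b, c a b = c b a)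
    (hd : ∀ a b, d a b = -d b a) : (∑ a, ∑ b, c a b * d a b) = 0 := by
  have h : (∑ a, ∑ b, c a b * d a b) = -∑ a, ∑ b, c a b * d a b := by
    conv_lhs => rw [Finset.sum_comm]
    rw [← Finset.sum_neg_distrib]
    refine Finset.sum_congr rfl fun a _ => ?_
    rw [← Finset.sum_neg_distrib]
    refine Finset.sum_congr rfl fun b _ => ?_
    rw [hc b a, hd b a]
    ring
  linarith

theorem const_iff {m N : ℕ} (F : Eb m N → ℝ) (hF : Differentiable ℝ F) :
    (∀ (e : Eb m N) (β : Fin N), fderiv ℝ F e (UV m N β) = 0) ↔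
      ∃ f : (Fin m → ℝ) → ℝ, ∀ e, F e = f e.1 := by
  constructor
  · intro h
    refine ⟨fun x => F (x, 0), fun e => ?_⟩
    have hz : ∀ u : Fin N → ℝ, fderiv ℝ (fun u : Fin N → ℝ => F (e.1, u)) u = 0 := by
      intro u
      have hinner : HasFDerivAt (fun u : Fin N → ℝ => ((e.1, u) : Eb m N))
          ((0 : (Fin N → ℝ) →L[ℝ] (Fin m → ℝ)).prod (ContinuousLinearMap.id ℝ (Fin N → ℝ)))
          u := (hasFDerivAt_const e.1 u).prodMk (hasFDerivAt_id u)
      have hcomp := (hF (e.1, u)).hasFDerivAt.comp u hinner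
      rw [show (fun u : Fin N → ℝ => F (e.1, u)) = F ∘ Prod.mk e.1 from rfl, hcomp.fderiv]
      apply ContinuousLinearMap.ext
      intro w
      have : fderiv ℝ F (e.1, u) ((0:Fin m → ℝ), w) = 0 := by
        rw [clm_expand]
        rw [Finset.sum_eq_zero fun j _ => by simp, Finset.sum_eq_zero fun β _ => ?_]
        · simp
        · rw [h (e.1, u) β]
          ring
      simpa [ContinuousLinearMap.comp_apply] using this
    have hφd : Differentiable ℝ (fun u : Fin N → ℝ => F (e.1, u)) :=
      hF.comp ((differentiable_const _).prodMk differentiable_id)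
    have hc := is_const_of_fderiv_eq_zero hφd hz e.2 0
    simpa using hc
  · rintro ⟨f, hf⟩ e β
    have hcurve : HasDerivAt (fun t : ℝ => e + t • UV m N β) (UV m N β) 0 := by
      have h1 : HasDerivAt (fun t : ℝ => t • UV m N β) ((1:ℝ) • UV m N β) 0 :=
        (hasDerivAt_id 0).smul_const (UV m N β)
      simpa using h1.const_add e
    have he0 : e + (0:ℝ) • UV m N β = e := by simp
    have h2 : HasDerivAt (fun t : ℝ => F (e + t • UV m N β)) (fderiv ℝ F e (UV m N β)) 0 := by
      have h4 := (hF (e + (0:ℝ) • UV m N β)).hasFDerivAt.comp_hasDerivAt 0 hcurve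
      rw [he0] at h4
      exact h4
    have h3 : (fun t : ℝ => F (e + t • UV m N β)) = fun _ => f e.1 := by
      funext t
      rw [hf]
      congr 1
      show (e + t • UV m N β).1 = e.1
      simp [UV]
    rw [h3] at h2
    exact h2.unique (hasDerivAt_const 0 _)

theorem dmx_Dt {m N : ℕ} (e : Eb m N) (w : Fin m → Eb m N) :
    dmxE m N e w = Dt (fun a => rX m N a) w := rfl

theorem main_formula {m N : ℕ}
    (H : (Fin m → ℝ) × (Fin N → ℝ) × (Fin m → Fin N → ℝ) → ℝ)
    (hH : ContDiff ℝ (⊤ : ℕ∞) H)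
    (S : Eb m N → Fin m → ℝ) (hS : ContDiff ℝ (⊤ : ℕ∞) S)
    (γ : Eb m N → Fin m → Fin N → ℝ)
    (hγ : ∀ (e : Eb m N) (i : Fin m) (α : Fin N),
      γ e i α = fderiv ℝ (fun y => S y i) e (0, Pi.single α 1))
    (G : Coch (Eb m N) m)
    (hG : ∀ (e : Eb m N) (v : Fin m → Eb m N),
      G e v = -(H (e.1, e.2, γ e)) * dmxE m N e v +
        ∑ i : Fin m, ∑ α : Fin N, γ e i α * duContrE m N α i e v)
    (e : Eb m N) (v : Fin (m + 1) → Eb m N) :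
    extDer G e v = ∑ α : Fin N,
      (-(fderiv ℝ (fun y => (∑ i, fderiv ℝ (fun z => S z i) y (XdirE m N i))
          + H (y.1, y.2, γ y)) e (UV m N α)))
        * Dt (Fin.cons (rU m N α) (fun a => rX m N a)) v := by
  -- smoothness facts
  have hSi : ∀ i, ContDiff ℝ (⊤:ℕ∞) (fun y => S y i) := fun i => contDiff_pi.1 hS i
  have hγfun : γ = fun y i α => fderiv ℝ (fun z => S z i) y (UV m N α) := by
    funext y i α
    exact hγ y i α
  have hγs : ContDiff ℝ (⊤:ℕ∞) γ := by
    rw [hγfun]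
    exact contDiff_pi.2 fun i => contDiff_pi.2 fun α => fderiv_const_smooth (hSi i) (UV m N α)
  have hh : ContDiff ℝ (⊤:ℕ∞) (fun y : Eb m N => H (y.1, y.2, γ y)) :=
    hH.comp (contDiff_fst.prodMk (contDiff_snd.prodMk hγs))
  have hγiα : ∀ i α, ContDiff ℝ (⊤:ℕ∞) (fun y => γ y i α) := by
    intro i α
    have := fderiv_const_smooth (hSi i) (UV m N α)
    rw [hγfun]
    exact this
  have hgX : ∀ i, ContDiff ℝ (⊤:ℕ∞) (fun y => fderiv ℝ (fun z => S z i) y (XdirE m N i)) :=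
    fun i => fderiv_const_smooth (hSi i) (XdirE m N i)
  -- the derivative of the coefficient functions
  have hder : ∀ (w : Fin m → Eb m N) (z : Eb m N),
      fderiv ℝ (fun y => G y w) e z
        = dmxE m N e w * (-(fderiv ℝ (fun y : Eb m N => H (y.1, y.2, γ y)) e z))
          + ∑ i, ∑ α, duContrE m N α i e w * fderiv ℝ (fun y => γ y i α) e z := by
    intro w z
    have hfun : (fun y => G y w)
        = fun y => -(H (y.1, y.2, γ y)) * dmxE m N e w
            + ∑ i, ∑ α, γ y i α * duContrE m N α i e w := by
      funext y
      rw [hG y w]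
      rfl
    have Hd : HasFDerivAt
        (fun y => -(H (y.1, y.2, γ y)) * dmxE m N e w
            + ∑ i, ∑ α, γ y i α * duContrE m N α i e w)
        ((dmxE m N e w) • (-(fderiv ℝ (fun y : Eb m N => H (y.1, y.2, γ y)) e))
          + ∑ i, ∑ α, (duContrE m N α i e w) • (fderiv ℝ (fun y => γ y i α) e)) e := by
      refine HasFDerivAt.add ?_ ?_
      · exact (((hh.differentiable top1) e).hasFDerivAt.neg).mul_const _
      · refine HasFDerivAt.fun_sum fun i _ => ?_
        refine HasFDerivAt.fun_sum fun α _ => ?_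
        exact (((hγiα i α).differentiable top1) e).hasFDerivAt.mul_const _
    rw [hfun, Hd.fderiv]
    simp only [ContinuousLinearMap.add_apply, ContinuousLinearMap.smul_apply,
      ContinuousLinearMap.coe_sum', Finset.sum_apply, ContinuousLinearMap.neg_apply,
      smul_eq_mul]
  -- step 2 : the exterior derivative, reorganized
  have step2 : extDer G e v
      = (∑ j : Fin (m+1), (-1:ℝ)^(j:ℕ)
            * (-(fderiv ℝ (fun y : Eb m N => H (y.1, y.2, γ y)) e (v j)))
            * dmxE m N e (v ∘ j.succAbove))
        + ∑ i, ∑ α, ∑ j : Fin (m+1),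
            (-1:ℝ)^(j:ℕ) * fderiv ℝ (fun y => γ y i α) e (v j)
              * duContrE m N α i e (v ∘ j.succAbove) := by
    have e1 : ∀ j : Fin (m+1),
        (-1:ℝ)^(j:ℕ) * fderiv ℝ (fun y => G y (v ∘ j.succAbove)) e (v j)
          = (-1:ℝ)^(j:ℕ) * (-(fderiv ℝ (fun y : Eb m N => H (y.1, y.2, γ y)) e (v j)))
              * dmxE m N e (v ∘ j.succAbove)
            + ∑ i, ∑ α, (-1:ℝ)^(j:ℕ) * fderiv ℝ (fun y => γ y i α) e (v j)
                * duContrE m N α i e (v ∘ j.succAbove) := by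
      intro j
      rw [hder (v ∘ j.succAbove) (v j), mul_add, Finset.mul_sum]
      congr 1
      · ring
      · refine Finset.sum_congr rfl fun i _ => ?_
        rw [Finset.mul_sum]
        refine Finset.sum_congr rfl fun α _ => ?_
        ring
    rw [extDer, Finset.sum_congr rfl fun j _ => e1 j, Finset.sum_add_distrib]
    congr 1
    rw [Finset.sum_comm]
    exact Finset.sum_congr rfl fun i _ => Finset.sum_comm
  rw [step2]
  clear step2 hder hG hγ
  cases m with
  | zero =>
    have hF0 : (fun y : Eb 0 N => (∑ i, fderiv ℝ (fun z => S z i) y (XdirE 0 N i))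
        + H (y.1, y.2, γ y)) = fun y : Eb 0 N => H (y.1, y.2, γ y) := by
      funext y
      simp
    rw [hF0, Fin.sum_univ_one]
    simp only [Finset.univ_eq_empty, Finset.sum_empty, add_zero]
    have hdmx : dmxE 0 N e (v ∘ (0 : Fin 1).succAbove) = 1 := Matrix.det_fin_zero
    rw [hdmx]
    have hDt : ∀ α, Dt (Fin.cons (rU 0 N α) (fun a => rX 0 N a)) v = (v 0).2 α := by
      intro α
      rw [Dt, Matrix.det_fin_one]
      rfl
    simp only [hDt]
    rw [clm_expand (fderiv ℝ (fun y : Eb 0 N => H (y.1, y.2, γ y)) e) (v 0)]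
    simp only [Finset.univ_eq_empty, Finset.sum_empty, zero_add, mul_one, pow_zero, one_mul]
    simp only [Fin.val_zero, pow_zero, one_mul, neg_mul, ← Finset.sum_neg_distrib]
  | succ k =>
    -- notation
    have negpow : ∀ i : ℕ, (-1:ℝ)^i * (-1:ℝ)^(i+1) = -1 := by
      intro i
      rw [← pow_add]
      exact Odd.neg_one_pow ⟨i, by ring⟩
    -- (A) the dH ∧ dmx part
    have hA : (∑ j : Fin (k+2), (-1:ℝ)^(j:ℕ)
          * (-(fderiv ℝ (fun y : Eb (k+1) N => H (y.1, y.2, γ y)) e (v j)))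
          * dmxE (k+1) N e (v ∘ j.succAbove))
        = ∑ β, (-(fderiv ℝ (fun y : Eb (k+1) N => H (y.1, y.2, γ y)) e (UV (k+1) N β)))
            * Dt (Fin.cons (rU (k+1) N β) (fun a => rX (k+1) N a)) v := by
      calc (∑ j : Fin (k+2), (-1:ℝ)^(j:ℕ)
          * (-(fderiv ℝ (fun y : Eb (k+1) N => H (y.1, y.2, γ y)) e (v j)))
          * dmxE (k+1) N e (v ∘ j.succAbove))
          = Dt (Fin.cons (fun z => (-(fderiv ℝ (fun y : Eb (k+1) N => H (y.1, y.2, γ y)) e)) z)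
              (fun a => rX (k+1) N a)) v := by
            rw [Dt_cons]
            refine Finset.sum_congr rfl fun j _ => ?_
            rw [dmx_Dt]
            simp
        _ = (∑ j, (-(fderiv ℝ (fun y : Eb (k+1) N => H (y.1, y.2, γ y)) e)) (XdirE (k+1) N j)
                * Dt (Fin.cons (rX (k+1) N j) (fun a => rX (k+1) N a)) v)
            + ∑ β, (-(fderiv ℝ (fun y : Eb (k+1) N => H (y.1, y.2, γ y)) e)) (UV (k+1) N β)
                * Dt (Fin.cons (rU (k+1) N β) (fun a => rX (k+1) N a)) v :=
          Dt_cons_clm _ _ _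
        _ = _ := by
            rw [Finset.sum_eq_zero fun j _ => by rw [Dt_xx_zero]; ring, zero_add]
            refine Finset.sum_congr rfl fun β _ => ?_
            simp
    -- (B) each dγ ∧ ω part
    have hB : ∀ (i : Fin (k+1)) (α : Fin N),
        (∑ j : Fin (k+2), (-1:ℝ)^(j:ℕ) * fderiv ℝ (fun y => γ y i α) e (v j)
            * duContrE (k+1) N α i e (v ∘ j.succAbove))
          = (-(fderiv ℝ (fun y => γ y i α) e (XdirE (k+1) N i)))
              * Dt (Fin.cons (rU (k+1) N α) (fun a => rX (k+1) N a)) v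
            + (-1:ℝ)^(i:ℕ) * ∑ β, fderiv ℝ (fun y => γ y i α) e (UV (k+1) N β)
                * Dt (Fin.cons (rU (k+1) N β) (Fin.cons (rU (k+1) N α)
                    (fun a => rX (k+1) N (i.succAbove a)))) v := by
      intro i α
      calc (∑ j : Fin (k+2), (-1:ℝ)^(j:ℕ) * fderiv ℝ (fun y => γ y i α) e (v j)
            * duContrE (k+1) N α i e (v ∘ j.succAbove))
          = (-1:ℝ)^(i:ℕ) * Dt (Fin.cons (fun z => fderiv ℝ (fun y => γ y i α) e z)
              (Fin.cons (rU (k+1) N α) (fun a => rX (k+1) N (i.succAbove a)))) v := by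
            rw [Dt_cons, Finset.mul_sum]
            refine Finset.sum_congr rfl fun j _ => ?_
            rw [duContrE_eq]
            ring
        _ = (-1:ℝ)^(i:ℕ) * ((∑ j, fderiv ℝ (fun y => γ y i α) e (XdirE (k+1) N j)
                * Dt (Fin.cons (rX (k+1) N j) (Fin.cons (rU (k+1) N α)
                    (fun a => rX (k+1) N (i.succAbove a)))) v)
              + ∑ β, fderiv ℝ (fun y => γ y i α) e (UV (k+1) N β)
                * Dt (Fin.cons (rU (k+1) N β) (Fin.cons (rU (k+1) N α)
                    (fun a => rX (k+1) N (i.succAbove a)))) v) := by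
            rw [Dt_cons_clm]
        _ = _ := by
            rw [Fintype.sum_eq_single i (fun j hj => by rw [Dt_xu_zero i j hj]; ring)]
            rw [Dt_xi_perm, mul_add]
            congr 1
            linear_combination (fderiv ℝ (fun y => γ y i α) e (XdirE (k+1) N i)
              * Dt (Fin.cons (rU (k+1) N α) (fun a => rX (k+1) N a)) v) * negpow (i:ℕ)
    rw [hA, Finset.sum_congr rfl fun i _ => Finset.sum_congr rfl fun α _ => hB i α]
    -- split the double sum
    simp only [Finset.sum_add_distrib]
    -- the symmetric-antisymmetric part vanishes
    have hC : (∑ i : Fin (k+1), ∑ α, (-1:ℝ)^(i:ℕ)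
        * ∑ β, fderiv ℝ (fun y => γ y i α) e (UV (k+1) N β)
            * Dt (Fin.cons (rU (k+1) N β) (Fin.cons (rU (k+1) N α)
                (fun a => rX (k+1) N (i.succAbove a)))) v) = 0 := by
      refine Finset.sum_eq_zero fun i _ => ?_
      rw [← Finset.mul_sum]
      have hz := sum_sym_antisym
        (fun α β => fderiv ℝ (fun y => γ y i α) e (UV (k+1) N β))
        (fun α β => Dt (Fin.cons (rU (k+1) N β) (Fin.cons (rU (k+1) N α)
            (fun a => rX (k+1) N (i.succAbove a)))) v)
        (fun a b => by
          simp only [hγfun]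
          exact sym2nd (hSi i) e (UV (k+1) N a) (UV (k+1) N b))
        (fun a b => Dt_swap01 _ _ _ _)
      rw [hz, mul_zero]
    rw [hC, add_zero]
    -- mixed partials swap
    have hmix : ∀ (i : Fin (k+1)) (α : Fin N),
        fderiv ℝ (fun y => γ y i α) e (XdirE (k+1) N i)
          = fderiv ℝ (fun y => fderiv ℝ (fun z => S z i) y (XdirE (k+1) N i)) e
              (UV (k+1) N α) := by
      intro i α
      simp only [hγfun]
      exact sym2nd (hSi i) e (UV (k+1) N α) (XdirE (k+1) N i)
    -- derivative of F
    have hFder : ∀ α, fderiv ℝ (fun y : Eb (k+1) N =>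
          (∑ i, fderiv ℝ (fun z => S z i) y (XdirE (k+1) N i)) + H (y.1, y.2, γ y)) e
            (UV (k+1) N α)
        = (∑ i, fderiv ℝ (fun y => fderiv ℝ (fun z => S z i) y (XdirE (k+1) N i)) e
            (UV (k+1) N α))
          + fderiv ℝ (fun y : Eb (k+1) N => H (y.1, y.2, γ y)) e (UV (k+1) N α) := by
      intro α
      have Hd : HasFDerivAt (fun y : Eb (k+1) N =>
          (∑ i, fderiv ℝ (fun z => S z i) y (XdirE (k+1) N i)) + H (y.1, y.2, γ y))
          ((∑ i, fderiv ℝ (fun y => fderiv ℝ (fun z => S z i) y (XdirE (k+1) N i)) e)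
            + fderiv ℝ (fun y : Eb (k+1) N => H (y.1, y.2, γ y)) e) e := by
        refine HasFDerivAt.add ?_ ((hh.differentiable top1 e).hasFDerivAt)
        exact HasFDerivAt.fun_sum fun i _ => ((hgX i).differentiable top1 e).hasFDerivAt
      rw [Hd.fderiv]
      simp [ContinuousLinearMap.sum_apply]
    -- final assembly
    rw [Finset.sum_comm, ← Finset.sum_add_distrib]
    refine Finset.sum_congr rfl fun α _ => ?_
    rw [hFder α]
    simp only [hmix]
    rw [← Finset.sum_mul, Finset.sum_neg_distrib]
    ring

end RHJ

/-- Reduced Hamilton–Jacobi equation, in coordinates.  Let `S = Sⁱ(x,u) ∂_i⌟d_mx` be a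
1-semibasic `m`-form on `E = ℝ^m × ℝ^N` and put `γⁱ_α = ∂Sⁱ/∂u^α` (the `p`-components of
the section of `J¹π* → E` determined by `γ̄ = dS`).  Then the `m`-form
`h∘μ∘γ̄ = −H(x,u,∂Sⁱ/∂u^α) d_mx + (∂Sⁱ/∂u^α) du^α∧(∂_i⌟d_mx)` on `E` is closed if and only
if there is `f : ℝ^m → ℝ` with
`∑ᵢ ∂Sⁱ/∂xⁱ(x,u) + H(x, u, ∂Sⁱ/∂u^α(x,u)) = f(x)` for all `(x,u)`. -/
theorem reduced_hamilton_jacobi (m N : ℕ)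
    (H : (Fin m → ℝ) × (Fin N → ℝ) × (Fin m → Fin N → ℝ) → ℝ)
    (hH : ContDiff ℝ (⊤ : ℕ∞) H)
    (S : Eb m N → Fin m → ℝ) (hS : ContDiff ℝ (⊤ : ℕ∞) S)
    -- the section `γⁱ_α = ∂Sⁱ/∂u^α`
    (γ : Eb m N → Fin m → Fin N → ℝ)
    (hγ : ∀ (e : Eb m N) (i : Fin m) (α : Fin N),
      γ e i α = fderiv ℝ (fun y => S y i) e (0, Pi.single α 1))
    -- the `m`-form `h∘μ∘γ̄` on `E`
    (G : Coch (Eb m N) m)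
    (hG : ∀ (e : Eb m N) (v : Fin m → Eb m N),
      G e v = -(H (e.1, e.2, γ e)) * dmxE m N e v +
        ∑ i : Fin m, ∑ α : Fin N, γ e i α * duContrE m N α i e v) :
    (∀ (e : Eb m N) (v : Fin (m + 1) → Eb m N), extDer G e v = 0) ↔
    (∃ f : (Fin m → ℝ) → ℝ, ∀ e : Eb m N,
      (∑ i : Fin m, fderiv ℝ (fun y => S y i) e (Pi.single i 1, 0)) +
        H (e.1, e.2, γ e) = f e.1) := by
    classical
  have hSi : ∀ i, ContDiff ℝ (⊤:ℕ∞) (fun y => S y i) := fun i => contDiff_pi.1 hS i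
  have hγfun : γ = fun y i α => fderiv ℝ (fun z => S z i) y (RHJ.UV m N α) := by
    funext y i α
    exact hγ y i α
  have hγs : ContDiff ℝ (⊤:ℕ∞) γ := by
    rw [hγfun]
    exact contDiff_pi.2 fun i => contDiff_pi.2 fun α =>
      RHJ.fderiv_const_smooth (hSi i) _
  have hh : ContDiff ℝ (⊤:ℕ∞) (fun y : Eb m N => H (y.1, y.2, γ y)) :=
    hH.comp (contDiff_fst.prodMk (contDiff_snd.prodMk hγs))
  have hFs : ContDiff ℝ (⊤:ℕ∞) (fun y : Eb m N =>
      (∑ i, fderiv ℝ (fun z => S z i) y (XdirE m N i)) + H (y.1, y.2, γ y)) := by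
    refine ContDiff.add ?_ hh
    exact ContDiff.sum fun i _ => RHJ.fderiv_const_smooth (hSi i) _
  have hFd : Differentiable ℝ (fun y : Eb m N =>
      (∑ i, fderiv ℝ (fun z => S z i) y (XdirE m N i)) + H (y.1, y.2, γ y)) :=
    hFs.differentiable RHJ.top1
  have key := RHJ.main_formula H hH S hS γ hγ G hG
  constructor
  · intro hclosed
    have hzero : ∀ (e : Eb m N) (α : Fin N),
        fderiv ℝ (fun y : Eb m N =>
          (∑ i, fderiv ℝ (fun z => S z i) y (XdirE m N i)) + H (y.1, y.2, γ y)) e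
          (RHJ.UV m N α) = 0 := by
      intro e α
      have h0 := hclosed e (Fin.cons (RHJ.UV m N α) (fun j => XdirE m N j))
      rw [key e _] at h0
      have hDt : ∀ β, RHJ.Dt (Fin.cons (RHJ.rU m N β) (fun a => RHJ.rX m N a))
          (Fin.cons (RHJ.UV m N α) (fun j => XdirE m N j))
            = if β = α then (1:ℝ) else 0 := by
        intro β
        by_cases hβ : β = α
        · subst hβ
          rw [RHJ.Dt]
          have hone : RHJ.Mx (Fin.cons (RHJ.rU m N β) (fun a => RHJ.rX m N a))
              (Fin.cons (RHJ.UV m N β) (fun j => XdirE m N j)) = 1 := by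
            funext a b
            refine Fin.cases ?_ (fun a' => ?_) a <;> refine Fin.cases ?_ (fun b' => ?_) b
            · simp [RHJ.rU, RHJ.UV, Matrix.one_apply]
            · simp [RHJ.rU, XdirE, Matrix.one_apply, (Fin.succ_ne_zero b').symm]
            · simp [RHJ.rX, RHJ.UV, Matrix.one_apply, Fin.succ_ne_zero a']
            · simp [RHJ.rX, XdirE, Matrix.one_apply, Pi.single_apply, Fin.succ_inj, eq_comm]
          rw [hone, Matrix.det_one]
          simp
        · rw [RHJ.Dt, Matrix.det_eq_zero_of_row_eq_zero 0 fun b => ?_]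
          · simp [hβ]
          · refine Fin.cases ?_ (fun b' => ?_) b
            · simp [RHJ.rU, RHJ.UV, Pi.single_apply, hβ]
            · simp [RHJ.rU, XdirE]
      simp only [hDt, mul_ite, mul_one, mul_zero, Finset.sum_ite_eq',
        Finset.mem_univ, if_true] at h0
      linarith
    obtain ⟨f, hf⟩ := (RHJ.const_iff _ hFd).1 hzero
    exact ⟨f, fun e => hf e⟩
  · rintro ⟨f, hf⟩ e v
    rw [key e v]
    have hzero := (RHJ.const_iff _ hFd).2 ⟨f, fun e => hf e⟩
    refine Finset.sum_eq_zero fun α _ => ?_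
    rw [hzero e α]
    ring
end
end

section
/- Conformal pullback identity on the multimomentum bundle (coordinate form). On Λ^m_2E = ℝ^m × ℝ^N × ℝ × ℝ^{mN} with coordinates (x^i, u^α, p, p^i_α), let Θ_2 = p d_mx + p^i_α du^α∧(∂_i⌟d_mx), let ϑ = ϑ_i(x)dx^i be a closed 1-form on ℝ^m with pullback θ to Λ^m_2E, and set Ω_{2,θ} = −dΘ_2 + θ∧Θ_2. Let γ̄ be the section of Λ^m_2E → E given by smooth functions ρ(x,u), γ^i_α(x,u), identified with the m-form γ̄ = ρ d_mx + γ^i_α du^α∧(∂_i⌟d_mx) on E. Then γ̄*θ = ϑ and γ̄*Ω_{2,θ} = −dγ̄ + ϑ∧γ̄ = −d_ϑγ̄. Consequently, γ̄*Ω_{2,θ} vanishes identically (equivalently, the image of γ̄ is a Lagrangian submanifold of the locally conformal multisymplectic manifold (Λ^m_2E, Ω_{2,θ}, θ)) if and only if γ̄ is closed with respect to the Lichnerowicz differential, d_ϑγ̄ = dγ̄ − ϑ∧γ̄ = 0. -/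
open scoped BigOperators

noncomputable section

/-- The extended multimomentum bundle `Λ^m_2E = ℝ^m × ℝ^N × ℝ × ℝ^{mN}` in coordinates
`(xⁱ, u^α, p, pⁱ_α)`. -/
abbrev Lb (m N : ℕ) : Type := (Fin m → ℝ) × (Fin N → ℝ) × ℝ × (Fin m → Fin N → ℝ)

/-- The coordinate volume form `d_mx` on `Λ^m_2E`. -/
def dmxL (m N : ℕ) : Coch (Lb m N) m := fun _ v => Matrix.det (Matrix.of fun a b => (v b).1 a)

/-- The coordinate 1-form `du^α` on `Λ^m_2E`. -/
def duL (m N : ℕ) (α : Fin N) : Coch (Lb m N) 1 := fun _ v => (v 0).2.1 α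

/-- The coordinate vector `∂/∂xⁱ` on `Λ^m_2E`. -/
def XdirL (m N : ℕ) (i : Fin m) : Lb m N := (Pi.single i 1, 0, 0, 0)

/-- The `m`-form `du^α ∧ (∂_i ⌟ d_mx) = -(∂_i ⌟ (du^α ∧ d_mx))` on `Λ^m_2E`. -/
def duContrL (m N : ℕ) (α : Fin N) (i : Fin m) : Coch (Lb m N) m := fun q v =>
  -(iotaV (fun _ => XdirL m N i) (wedge1 (duL m N α) (dmxL m N)) q v)

/-- The canonical `m`-form `Θ₂ = p d_mx + pⁱ_α du^α∧(∂_i⌟d_mx)` on `Λ^m_2E`. -/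
def Theta2 (m N : ℕ) : Coch (Lb m N) m := fun q v =>
  q.2.2.1 * dmxL m N q v +
    ∑ i : Fin m, ∑ α : Fin N, q.2.2.2 i α * duContrL m N α i q v

/-- The pullback to `Λ^m_2E` of the 1-form `ϑ = ϑ_i(x) dxⁱ` on the base. -/
def thL (m N : ℕ) (ϑ : (Fin m → ℝ) → Fin m → ℝ) : Coch (Lb m N) 1 := fun q v =>
  ∑ i : Fin m, ϑ q.1 i * (v 0).1 i

/-- The locally conformal multisymplectic `(m+1)`-form
`Ω_{2,θ} = −dΘ₂ + θ∧Θ₂` on `Λ^m_2E`. -/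
noncomputable def Omega2Th (m N : ℕ) (ϑ : (Fin m → ℝ) → Fin m → ℝ) :
    Coch (Lb m N) (m + 1) := fun q v =>
  -(extDer (Theta2 m N) q v) + wedge1 (thL m N ϑ) (Theta2 m N) q v

/-- The pullback to `E` of the 1-form `ϑ = ϑ_i(x) dxⁱ` on the base. -/
def thE (m N : ℕ) (ϑ : (Fin m → ℝ) → Fin m → ℝ) : Coch (Eb m N) 1 := fun e v =>
  ∑ i : Fin m, ϑ e.1 i * (v 0).1 i


section ConformalHelpers

variable {m N : ℕ}

/-- `duContrL` only depends on the `x` and `u` components of vectors. -/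
lemma duContrL_proj (α : Fin N) (i : Fin m) (q : Lb m N) (e : Eb m N)
    (W : Fin m → Lb m N) (V : Fin m → Eb m N)
    (h1 : ∀ a, (W a).1 = (V a).1) (h2 : ∀ a, (W a).2.1 = (V a).2) :
    duContrL m N α i q W = duContrE m N α i e V := by
  have hc1 : ∀ k : Fin (m + 1),
      ((Fin.cons (XdirL m N i) W : Fin (m + 1) → Lb m N) k).1 =
        ((Fin.cons (XdirE m N i) V : Fin (m + 1) → Eb m N) k).1 := by
    intro k
    induction k using Fin.cases with
    | zero => rfl
    | succ k => simpa using h1 k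
  have hc2 : ∀ k : Fin (m + 1),
      ((Fin.cons (XdirL m N i) W : Fin (m + 1) → Lb m N) k).2.1 =
        ((Fin.cons (XdirE m N i) V : Fin (m + 1) → Eb m N) k).2 := by
    intro k
    induction k using Fin.cases with
    | zero => rfl
    | succ k => simpa using h2 k
  simp only [duContrL, duContrE, iotaV, wedge1, duL, duE, dmxL, dmxE]
  congr 1
  refine Finset.sum_congr rfl fun j _ => ?_
  rw [hc2 j]
  congr 2
  ext a b
  exact congrArg (fun z => z a) (hc1 (j.succAbove b))

/-- The derivative of the linear coefficient functional on `Λ^m_2E`. -/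
lemma fderiv_linL (c1 : ℝ) (c : Fin m → Fin N → ℝ) (q w : Lb m N) :
    fderiv ℝ (fun y : Lb m N => y.2.2.1 * c1 + ∑ i, ∑ α, y.2.2.2 i α * c i α) q w
      = w.2.2.1 * c1 + ∑ i, ∑ α, w.2.2.2 i α * c i α := by
  set P1 : Lb m N →L[ℝ] ℝ :=
    (ContinuousLinearMap.fst ℝ ℝ (Fin m → Fin N → ℝ)).comp
      ((ContinuousLinearMap.snd ℝ (Fin N → ℝ) (ℝ × (Fin m → Fin N → ℝ))).comp
        (ContinuousLinearMap.snd ℝ (Fin m → ℝ) ((Fin N → ℝ) × ℝ × (Fin m → Fin N → ℝ)))) with hP1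
  set P2 : Fin m → Fin N → (Lb m N →L[ℝ] ℝ) := fun i α =>
    ((ContinuousLinearMap.proj α).comp (ContinuousLinearMap.proj (R := ℝ) (φ := fun _ : Fin m => Fin N → ℝ) i)).comp
      ((ContinuousLinearMap.snd ℝ ℝ (Fin m → Fin N → ℝ)).comp
        ((ContinuousLinearMap.snd ℝ (Fin N → ℝ) (ℝ × (Fin m → Fin N → ℝ))).comp
          (ContinuousLinearMap.snd ℝ (Fin m → ℝ) ((Fin N → ℝ) × ℝ × (Fin m → Fin N → ℝ))))) with hP2
  have h : HasFDerivAt (fun y : Lb m N => y.2.2.1 * c1 + ∑ i, ∑ α, y.2.2.2 i α * c i α)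
      ((c1 • P1) + ∑ i, ∑ α, (c i α) • P2 i α) q := by
    exact (P1.hasFDerivAt.mul_const c1).add
      (HasFDerivAt.fun_sum fun i _ => HasFDerivAt.fun_sum fun α _ =>
        (P2 i α).hasFDerivAt.mul_const (c i α))
  rw [h.fderiv]
  simp only [ContinuousLinearMap.add_apply, ContinuousLinearMap.coe_sum',
    Finset.sum_apply, ContinuousLinearMap.smul_apply, smul_eq_mul]
  have hPw : P1 w = w.2.2.1 := rfl
  have hPw2 : ∀ i α, P2 i α w = w.2.2.2 i α := fun _ _ => rfl
  simp_rw [hPw, hPw2, mul_comm]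

/-- The derivative of the coefficient functional on `E`. -/
lemma fderiv_linE (ρ : Eb m N → ℝ) (hρ : Differentiable ℝ ρ)
    (γ : Eb m N → Fin m → Fin N → ℝ) (hγ : Differentiable ℝ γ)
    (c1 : ℝ) (c : Fin m → Fin N → ℝ) (e w : Eb m N) :
    fderiv ℝ (fun y : Eb m N => ρ y * c1 + ∑ i, ∑ α, γ y i α * c i α) e w
      = fderiv ℝ ρ e w * c1 + ∑ i, ∑ α, fderiv ℝ γ e w i α * c i α := by
  set L : Fin m → Fin N → ((Fin m → Fin N → ℝ) →L[ℝ] ℝ) := fun i α =>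
    (ContinuousLinearMap.proj α).comp (ContinuousLinearMap.proj (R := ℝ) (φ := fun _ : Fin m => Fin N → ℝ) i) with hL
  have hγi : ∀ (i : Fin m) (α : Fin N),
      HasFDerivAt (fun y => γ y i α) ((L i α).comp (fderiv ℝ γ e)) e := by
    intro i α
    exact (L i α).hasFDerivAt.comp e (hγ e).hasFDerivAt
  have h : HasFDerivAt (fun y : Eb m N => ρ y * c1 + ∑ i, ∑ α, γ y i α * c i α)
      ((c1 • fderiv ℝ ρ e) + ∑ i, ∑ α, (c i α) • ((L i α).comp (fderiv ℝ γ e))) e := by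
    exact ((hρ e).hasFDerivAt.mul_const c1).add
      (HasFDerivAt.fun_sum fun i _ => HasFDerivAt.fun_sum fun α _ => (hγi i α).mul_const (c i α))
  rw [h.fderiv]
  simp only [ContinuousLinearMap.add_apply, ContinuousLinearMap.coe_sum',
    Finset.sum_apply, ContinuousLinearMap.smul_apply, smul_eq_mul]
  have hLw : ∀ i α, ((L i α).comp (fderiv ℝ γ e)) w = fderiv ℝ γ e w i α := fun _ _ => rfl
  simp_rw [hLw, mul_comm]

end ConformalHelpers

/-- Conformal pullback identity on the multimomentum bundle, in coordinates.  Let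
`γ̄ = ρ d_mx + γⁱ_α du^α∧(∂_i⌟d_mx)` be a section of `Λ^m_2E → E`, i.e. the map
`(x,u) ↦ (x, u, ρ(x,u), γⁱ_α(x,u))`, let `ϑ = ϑ_i(x)dxⁱ` be a closed 1-form on `ℝ^m`
with pullback `θ`, and `Ω_{2,θ} = −dΘ₂ + θ∧Θ₂`.  Then `γ̄*θ = ϑ` and
`γ̄*Ω_{2,θ} = −dγ̄ + ϑ∧γ̄ = −d_ϑγ̄`; consequently `γ̄*Ω_{2,θ} ≡ 0` (the image of `γ̄` is a
Lagrangian submanifold of `(Λ^m_2E, Ω_{2,θ}, θ)`) iff `d_ϑγ̄ = dγ̄ − ϑ∧γ̄ = 0`. -/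
theorem conformal_pullback_identity (m N : ℕ)
    (ϑ : (Fin m → ℝ) → Fin m → ℝ) (hϑ : ContDiff ℝ (⊤ : ℕ∞) ϑ)
    -- `ϑ` is closed
    (hϑclosed : ∀ (x : Fin m → ℝ) (i j : Fin m),
      fderiv ℝ (fun y => ϑ y i) x (Pi.single j 1) =
        fderiv ℝ (fun y => ϑ y j) x (Pi.single i 1))
    (ρ : Eb m N → ℝ) (hρ : ContDiff ℝ (⊤ : ℕ∞) ρ)
    (γ : Eb m N → Fin m → Fin N → ℝ) (hγ : ContDiff ℝ (⊤ : ℕ∞) γ)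
    -- the section `γ̄ : E → Λ^m_2E`
    (gbar : Eb m N → Lb m N) (hgbar : ∀ e : Eb m N, gbar e = (e.1, e.2, ρ e, γ e))
    -- `γ̄` as an `m`-form on `E`
    (Gbar : Coch (Eb m N) m)
    (hGbar : ∀ (e : Eb m N) (v : Fin m → Eb m N),
      Gbar e v = ρ e * dmxE m N e v +
        ∑ i : Fin m, ∑ α : Fin N, γ e i α * duContrE m N α i e v) :
    -- `γ̄*θ = ϑ`
    (∀ (e : Eb m N) (v : Fin 1 → Eb m N),
      pullC gbar (thL m N ϑ) e v = thE m N ϑ e v) ∧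
    -- `γ̄*Ω_{2,θ} = −dγ̄ + ϑ∧γ̄ = −d_ϑγ̄`
    (∀ (e : Eb m N) (v : Fin (m + 1) → Eb m N),
      pullC gbar (Omega2Th m N ϑ) e v =
        -(extDer Gbar e v) + wedge1 (thE m N ϑ) Gbar e v) ∧
    -- `γ̄*Ω_{2,θ} ≡ 0` iff `d_ϑγ̄ = 0`
    ((∀ (e : Eb m N) (v : Fin (m + 1) → Eb m N), pullC gbar (Omega2Th m N ϑ) e v = 0) ↔
      (∀ (e : Eb m N) (v : Fin (m + 1) → Eb m N),
        extDer Gbar e v - wedge1 (thE m N ϑ) Gbar e v = 0)) := by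
  have hρd : Differentiable ℝ ρ := hρ.differentiable (by simp)
  have hγd : Differentiable ℝ γ := hγ.differentiable (by simp)
  have hgfun : gbar = fun e => (e.1, e.2, ρ e, γ e) := funext hgbar
  -- the derivative of the section `γ̄`
  have hD : ∀ e w : Eb m N,
      fderiv ℝ gbar e w = (w.1, w.2, fderiv ℝ ρ e w, fderiv ℝ γ e w) := by
    intro e w
    have h : HasFDerivAt gbar
        ((ContinuousLinearMap.fst ℝ (Fin m → ℝ) (Fin N → ℝ)).prod
          ((ContinuousLinearMap.snd ℝ (Fin m → ℝ) (Fin N → ℝ)).prod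
            ((fderiv ℝ ρ e).prod (fderiv ℝ γ e)))) e := by
      rw [hgfun]
      exact HasFDerivAt.prodMk hasFDerivAt_fst (HasFDerivAt.prodMk hasFDerivAt_snd
        ((hρd e).hasFDerivAt.prodMk (hγd e).hasFDerivAt))
    rw [h.fderiv]
    rfl
  -- `γ̄*Θ₂ = γ̄` as forms
  have hTheta : ∀ (e : Eb m N) (V : Fin m → Eb m N),
      Theta2 m N (gbar e) (fun a => fderiv ℝ gbar e (V a)) = Gbar e V := by
    intro e V
    have hdm : dmxL m N (gbar e) (fun a => fderiv ℝ gbar e (V a)) = dmxE m N e V := by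
      simp only [dmxL, dmxE]
      congr 1
      ext a b
      simp only [Matrix.of_apply, hD]
    have hdc : ∀ (i : Fin m) (α : Fin N),
        duContrL m N α i (gbar e) (fun a => fderiv ℝ gbar e (V a)) = duContrE m N α i e V :=
      fun i α => duContrL_proj α i _ e _ V (fun a => by rw [hD]) (fun a => by rw [hD])
    rw [hGbar]
    simp only [Theta2, hdm, hdc]
    rw [hgbar e]
  -- `γ̄*θ = ϑ`
  have hpull1 : ∀ (e : Eb m N) (v : Fin 1 → Eb m N),
      pullC gbar (thL m N ϑ) e v = thE m N ϑ e v := by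
    intro e v
    simp only [pullC, thL, thE]
    refine Finset.sum_congr rfl fun i _ => ?_
    rw [hD, hgbar]
  -- `γ̄*(dΘ₂) = dγ̄`
  have hExt : ∀ (e : Eb m N) (v : Fin (m + 1) → Eb m N),
      extDer (Theta2 m N) (gbar e) (fun a => fderiv ℝ gbar e (v a)) = extDer Gbar e v := by
    intro e v
    simp only [extDer]
    refine Finset.sum_congr rfl fun j _ => ?_
    congr 1
    have hdm : dmxL m N (gbar e) ((fun a => fderiv ℝ gbar e (v a)) ∘ j.succAbove)
        = dmxE m N e (v ∘ j.succAbove) := by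
      simp only [dmxL, dmxE, Function.comp]
      congr 1
      ext a b
      simp only [Matrix.of_apply, hD]
    have hdc : ∀ (i : Fin m) (α : Fin N),
        duContrL m N α i (gbar e) ((fun a => fderiv ℝ gbar e (v a)) ∘ j.succAbove)
          = duContrE m N α i e (v ∘ j.succAbove) :=
      fun i α => duContrL_proj α i _ e _ (v ∘ j.succAbove)
        (fun a => by rw [Function.comp_apply, hD]; rfl)
        (fun a => by rw [Function.comp_apply, hD]; rfl)
    have hfunL : (fun y => Theta2 m N y ((fun a => fderiv ℝ gbar e (v a)) ∘ j.succAbove)) =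
        (fun y : Lb m N =>
          y.2.2.1 * dmxL m N (gbar e) ((fun a => fderiv ℝ gbar e (v a)) ∘ j.succAbove)
            + ∑ i, ∑ α, y.2.2.2 i α *
                duContrL m N α i (gbar e) ((fun a => fderiv ℝ gbar e (v a)) ∘ j.succAbove)) :=
      rfl
    have hfunR : (fun y => Gbar y (v ∘ j.succAbove)) =
        (fun y : Eb m N => ρ y * dmxE m N e (v ∘ j.succAbove)
          + ∑ i, ∑ α, γ y i α * duContrE m N α i e (v ∘ j.succAbove)) := by
      funext y
      rw [hGbar]
      rfl
    rw [hfunL, hfunR, fderiv_linL, fderiv_linE ρ hρd γ hγd, hD e (v j)]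
    simp only [hdm, hdc]
  -- `γ̄*(θ∧Θ₂) = ϑ∧γ̄`
  have hWedge : ∀ (e : Eb m N) (v : Fin (m + 1) → Eb m N),
      wedge1 (thL m N ϑ) (Theta2 m N) (gbar e) (fun a => fderiv ℝ gbar e (v a))
        = wedge1 (thE m N ϑ) Gbar e v := by
    intro e v
    simp only [wedge1]
    refine Finset.sum_congr rfl fun j _ => ?_
    have hth : thL m N ϑ (gbar e) (fun _ => fderiv ℝ gbar e (v j))
        = thE m N ϑ e (fun _ => v j) := by
      simp only [thL, thE]
      refine Finset.sum_congr rfl fun i _ => ?_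
      rw [hD, hgbar]
    have hT : Theta2 m N (gbar e) ((fun a => fderiv ℝ gbar e (v a)) ∘ j.succAbove)
        = Gbar e (v ∘ j.succAbove) := hTheta e (v ∘ j.succAbove)
    rw [hth, hT]
  -- `γ̄*Ω_{2,θ} = −dγ̄ + ϑ∧γ̄`
  have hpull2 : ∀ (e : Eb m N) (v : Fin (m + 1) → Eb m N),
      pullC gbar (Omega2Th m N ϑ) e v =
        -(extDer Gbar e v) + wedge1 (thE m N ϑ) Gbar e v := by
    intro e v
    simp only [pullC, Omega2Th]
    rw [hExt e v, hWedge e v]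
  refine ⟨hpull1, hpull2, ?_⟩
  constructor
  · intro h e v
    have h0 := h e v
    rw [hpull2 e v] at h0
    linarith
  · intro h e v
    rw [hpull2 e v]
    have h0 := h e v
    linarith
end
end
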